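/- Let O ⊆ ℝ² be a connected open set, with D = dom(O) and I = im(O). Then: (1) joinsemi(tMoves(O)) = tMoves((D ∪ I) × (D ∪ I)); (2a) if D ∩ I = ∅, then joinsemi(rMoves(O)) = rMoves((D × I) ∪ (I × D)) ∪ tMoves((D × D) ∪ (I × I)); (2b) if D ∩ I ≠ ∅, then joinsemi(rMoves(O)) = moves((D ∪ I) × (D ∪ I)); (3) joinsemi(moves(O)) = moves((D ∪ I) × (D ∪ I)). -/
import Mathlib


open Filter Set

noncomputable section

/-- The unrestricted translation (`b = false`) or reflection (`b = true`)
with parameter `p`: `x ↦ x + p`, resp. `x ↦ p - x`. -/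
def uEval (b : Bool) (p : ℝ) (x : ℝ) : ℝ := if b then p - x else x + p

/-- A restricted move `γ|_D`: a translation (`isRefl = false`) or a
reflection (`isRefl = true`) together with a domain. -/
structure Move where
  isRefl : Bool
  param : ℝ
  dom : Set ℝ

namespace Move

def eval (m : Move) : ℝ → ℝ := uEval m.isRefl m.param

/-- The character: `+1` for translations, `-1` for reflections. -/
def chi (m : Move) : ℝ := if m.isRefl then -1 else 1

def image (m : Move) : Set ℝ := m.eval '' m.dom

def graph (m : Move) : Set (ℝ × ℝ) := (fun x => (x, m.eval x)) '' m.dom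

/-- Domains of moves must be open intervals or empty. -/
def ValidDom (D : Set ℝ) : Prop := IsOpen D ∧ D.OrdConnected

/-- A valid move: open-interval-or-empty domain; moves with empty domain are
normalized (`param = 0`), so that there are exactly two empty moves, one of
each character. -/
def Valid (m : Move) : Prop := ValidDom m.dom ∧ (m.dom = ∅ → m.param = 0)

/-- The move `γ|_D` (normalized representative). -/
def mk' (b : Bool) (p : ℝ) (D : Set ℝ) : Move :=
  letI : Decidable (D = ∅) := Classical.dec _
  ⟨b, if D = ∅ then 0 else p, D⟩

/-- Composition of moves: `γ₂|_{D₂} ∘ γ₁|_{D₁} = (γ₂ ∘ γ₁)|_{D₁ ∩ γ₁⁻¹ D₂}`. -/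
def comp (m2 m1 : Move) : Move :=
  mk' (m2.isRefl != m1.isRefl)
    (if m2.isRefl then m2.param - m1.param else m1.param + m2.param)
    (m1.dom ∩ m1.eval ⁻¹' m2.dom)

/-- Inverse of a move: `(γ|_D)⁻¹ = γ⁻¹|_{γ(D)}`. -/
def inv (m : Move) : Move :=
  mk' m.isRefl (if m.isRefl then m.param else -m.param) (m.eval '' m.dom)

/-- The restriction partial order: `m1` is a restriction of `m2`. -/
def le (m1 m2 : Move) : Prop :=
  m1.isRefl = m2.isRefl ∧ m1.dom ⊆ m2.dom ∧ ∀ x ∈ m1.dom, m1.eval x = m2.eval x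

end Move

/-- A move ensemble: a set of (valid) moves. -/
def IsMoveEnsemble (Ω : Set Move) : Prop := ∀ m ∈ Ω, m.Valid

/-- A move semigroup: a move ensemble closed under composition and inverse. -/
def IsMoveSemigroup (Γ : Set Move) : Prop :=
  IsMoveEnsemble Γ ∧ (∀ m1 ∈ Γ, ∀ m2 ∈ Γ, Move.comp m2 m1 ∈ Γ) ∧
    (∀ m ∈ Γ, Move.inv m ∈ Γ)

/-- `⟨Ω⟩`: the smallest move semigroup containing `Ω`. -/
def semi (Ω : Set Move) : Set Move := ⋂₀ {Γ | IsMoveSemigroup Γ ∧ Ω ⊆ Γ}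

/-- Axiom (restrict). -/
def RestrictClosed (Ω : Set Move) : Prop :=
  ∀ m ∈ Ω, ∀ D' : Set ℝ, D' ⊆ m.dom → Move.ValidDom D' →
    Move.mk' m.isRefl m.param D' ∈ Ω

/-- The restriction closure of an ensemble. -/
def restrictCl (Ω : Set Move) : Set Move := ⋂₀ {Γ | RestrictClosed Γ ∧ Ω ⊆ Γ}

/-- Join-closed: restriction-closed and closed under continuation (joins). -/
def JoinClosed (Ω : Set Move) : Prop :=
  RestrictClosed Ω ∧
    ∀ (b : Bool) (p : ℝ) (J : Set (Set ℝ)), J.Nonempty →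
      (∀ I ∈ J, Move.mk' b p I ∈ Ω) → (⋃₀ J).OrdConnected →
      Move.mk' b p (⋃₀ J) ∈ Ω

/-- `join(Ω)`: the smallest join-closed ensemble containing `Ω`. -/
def joinCl (Ω : Set Move) : Set Move := ⋂₀ {Γ | JoinClosed Γ ∧ Ω ⊆ Γ}

/-- `joinsemi(Ω) = join(⟨Ω⟩)`: the joined move semigroup generated by `Ω`. -/
def joinsemi (Ω : Set Move) : Set Move := joinCl (semi Ω)

/-- `θ` respects the move `γ|_D`: `θ(γ(x)) = χ(γ)·θ(x) + c` on `D`. -/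
def Respects (θ : ℝ → ℝ) (m : Move) : Prop :=
  ∃ c : ℝ, ∀ x ∈ m.dom, θ (m.eval x) = m.chi * θ x + c

/-- `θ` respects each move of the ensemble `Ω`. -/
def RespectsAll (θ : ℝ → ℝ) (Ω : Set Move) : Prop := ∀ m ∈ Ω, Respects θ m

/-- All translation moves with graph contained in `O`. -/
def tMoves (O : Set (ℝ × ℝ)) : Set Move :=
  {m | m.isRefl = false ∧ m.Valid ∧ m.graph ⊆ O}

/-- All reflection moves with graph contained in `O`. -/
def rMoves (O : Set (ℝ × ℝ)) : Set Move :=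
  {m | m.isRefl = true ∧ m.Valid ∧ m.graph ⊆ O}

/-- All moves with graph contained in `O`. -/
def movesIn (O : Set (ℝ × ℝ)) : Set Move := {m | m.Valid ∧ m.graph ⊆ O}

/-- Translation moves graph of an ensemble. -/
def grPlus (Ω : Set Move) : Set (ℝ × ℝ) :=
  {q | ∃ m ∈ Ω, m.isRefl = false ∧ q ∈ m.graph}

/-- Reflection moves graph of an ensemble. -/
def grMinus (Ω : Set Move) : Set (ℝ × ℝ) :=
  {q | ∃ m ∈ Ω, m.isRefl = true ∧ q ∈ m.graph}

/-- `dom(O)`: union of the domains of the moves in `movesIn O`. -/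
def domOf (O : Set (ℝ × ℝ)) : Set ℝ := {x | ∃ m ∈ movesIn O, x ∈ m.dom}

/-- `im(O)`: union of the images of the moves in `movesIn O`. -/
def imOf (O : Set (ℝ × ℝ)) : Set ℝ := {x | ∃ m ∈ movesIn O, x ∈ m.image}

/-- domain of a move ensemble. -/
def domEns (Ω : Set Move) : Set ℝ := {x | ∃ m ∈ Ω, x ∈ m.dom}

/-- image of a move ensemble. -/
def imEns (Ω : Set Move) : Set ℝ := {x | ∃ m ∈ Ω, x ∈ m.image}

/-- Convergence of a sequence of unrestricted moves (character, parameter):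
all but finitely many have character `b`, and the parameters tend to `p`. -/
def ConvergesTo (γ : ℕ → Bool × ℝ) (b : Bool) (p : ℝ) : Prop :=
  (∀ᶠ i in atTop, (γ i).1 = b) ∧ Tendsto (fun i => (γ i).2) atTop (nhds p)

/-- Axiom (lim): fixed-domain limits of moves. -/
def LimClosed (Ω : Set Move) : Prop :=
  ∀ D : Set ℝ, Move.ValidDom D →
    ∀ (γ : ℕ → Bool × ℝ) (b : Bool) (p : ℝ), ConvergesTo γ b p →
      (∀ i, Move.mk' (γ i).1 (γ i).2 D ∈ Ω) → Move.mk' b p D ∈ Ω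

/-- `lim(Ω)`: the smallest superset of `Ω` satisfying (lim). -/
def limCl (Ω : Set Move) : Set Move := ⋂₀ {Γ | LimClosed Γ ∧ Ω ⊆ Γ}

/-- Axiom (arblim): limits of moves with converging domains. -/
def ArbLimClosed (Ω : Set Move) : Prop :=
  ∀ (γ : ℕ → Bool × ℝ) (b : Bool) (p : ℝ) (l u : ℕ → ℝ) (l₀ u₀ : ℝ),
    ConvergesTo γ b p → Tendsto l atTop (nhds l₀) → Tendsto u atTop (nhds u₀) →
    (∀ i, Move.mk' (γ i).1 (γ i).2 (Set.Ioo (l i) (u i)) ∈ Ω) →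
    Move.mk' b p (Set.Ioo l₀ u₀) ∈ Ω

/-- `arblim(Ω)`: the smallest superset of `Ω` satisfying (arblim). -/
def arblimCl (Ω : Set Move) : Set Move := ⋂₀ {Γ | ArbLimClosed Γ ∧ Ω ⊆ Γ}

/-- Axiom (kaleido). -/
def Kaleidoscopic (Ω : Set Move) : Prop :=
  ∀ D I : Set ℝ, Move.ValidDom D → Move.ValidDom I →
    (tMoves (D ×ˢ I) ⊆ Ω ↔ rMoves (D ×ˢ I) ⊆ Ω)

/-- Axiom (extend_A): continuous domain extension relative to the open set `A`. -/
def ExtendClosed (A : Set ℝ) (Ω : Set Move) : Prop :=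
  ∀ (b : Bool) (p : ℝ) (J : Set (Set ℝ)) (D : Set ℝ), J.Nonempty →
    (∀ I ∈ J, Move.mk' b p I ∈ Ω) → Move.ValidDom D →
    D ⊆ closure (⋃₀ J) ∩ A ∩ uEval b p ⁻¹' A →
    Move.mk' b p D ∈ Ω

/-- `joinextend_A(Ω)`: the smallest superset of `Ω` satisfying (extend_A). -/
def joinExtendCl (A : Set ℝ) (Ω : Set Move) : Set Move :=
  ⋂₀ {Γ | ExtendClosed A Γ ∧ Ω ⊆ Γ}

/-- A closed move semigroup with respect to the open set `A`. -/
def ClosedMoveSemigroup (A : Set ℝ) (Γ : Set Move) : Prop :=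
  IsMoveSemigroup Γ ∧ JoinClosed Γ ∧ Kaleidoscopic Γ ∧ LimClosed Γ ∧
    ExtendClosed A Γ

/-- The moves closure `ctscl(Ω)`: the smallest closed move semigroup
(with respect to `A`) containing `Ω`. -/
def ctscl (A : Set ℝ) (Ω : Set Move) : Set Move :=
  ⋂₀ {Γ | ClosedMoveSemigroup A Γ ∧ Ω ⊆ Γ}

/-- The set of maximal elements of `Ω` in the restriction partial order. -/
def MaxOf (Ω : Set Move) : Set Move :=
  {m ∈ Ω | ∀ m' ∈ Ω, Move.le m m' → Move.le m' m}

/-! ### Auxiliary lemmas -/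

section Aux

/-- The inverse parameter. -/
def ipar (b : Bool) (p : ℝ) : ℝ := if b then p else -p

@[simp] lemma uEval_false (p x : ℝ) : uEval false p x = x + p := rfl

@[simp] lemma uEval_true (p x : ℝ) : uEval true p x = p - x := rfl

lemma uEval_ipar (b : Bool) (p x : ℝ) : uEval b (ipar b p) (uEval b p x) = x := by
  cases b <;> simp [ipar]

lemma uEval_ipar' (b : Bool) (p x : ℝ) : uEval b p (uEval b (ipar b p) x) = x := by
  cases b <;> simp [ipar]

lemma uEval_continuous (b : Bool) (p : ℝ) : Continuous (uEval b p) := by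
  cases b
  · exact (continuous_id.add continuous_const : Continuous fun x : ℝ => x + p)
  · exact (continuous_const.sub continuous_id : Continuous fun x : ℝ => p - x)

lemma uEval_param_inj {b : Bool} {p q x : ℝ} (h : uEval b p x = uEval b q x) : p = q := by
  cases b <;> simp at h <;> linarith

lemma ordConnected_preimage (b : Bool) (p : ℝ) {U : Set ℝ} (h : U.OrdConnected) :
    (uEval b p ⁻¹' U).OrdConnected := by
  constructor
  intro x hx y hy z hz
  simp only [mem_preimage] at *
  cases b
  · exact h.out hx hy ⟨by simp; linarith [hz.1], by simp; linarith [hz.2]⟩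
  · exact h.out hy hx ⟨by simp; linarith [hz.2], by simp; linarith [hz.1]⟩

lemma image_uEval (b : Bool) (p : ℝ) (U : Set ℝ) :
    uEval b p '' U = uEval b (ipar b p) ⁻¹' U :=
  congrFun (Set.image_eq_preimage_of_inverse (g := uEval b (ipar b p)) (uEval_ipar b p) (uEval_ipar' b p)) U

lemma validDom_preimage (b : Bool) (p : ℝ) {U : Set ℝ} (h : Move.ValidDom U) :
    Move.ValidDom (uEval b p ⁻¹' U) :=
  ⟨h.1.preimage (uEval_continuous b p), ordConnected_preimage b p h.2⟩

lemma validDom_image (b : Bool) (p : ℝ) {U : Set ℝ} (h : Move.ValidDom U) :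
    Move.ValidDom (uEval b p '' U) := by
  rw [image_uEval]; exact validDom_preimage _ _ h

namespace Move

@[simp] lemma mk'_isRefl (b : Bool) (p : ℝ) (D : Set ℝ) : (Move.mk' b p D).isRefl = b := rfl

@[simp] lemma mk'_dom (b : Bool) (p : ℝ) (D : Set ℝ) : (Move.mk' b p D).dom = D := rfl

lemma mk'_eq_of_ne {D : Set ℝ} (b : Bool) (p : ℝ) (h : D ≠ ∅) :
    Move.mk' b p D = ⟨b, p, D⟩ := by
  simp [Move.mk', h]

lemma mk'_empty (b : Bool) (p : ℝ) : Move.mk' b p ∅ = ⟨b, 0, ∅⟩ := by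
  simp [Move.mk']

lemma mk'_valid (b : Bool) (p : ℝ) {D : Set ℝ} (h : Move.ValidDom D) :
    (Move.mk' b p D).Valid := by
  rcases eq_or_ne D ∅ with rfl | hD
  · rw [mk'_empty]; exact ⟨h, fun _ => rfl⟩
  · rw [mk'_eq_of_ne _ _ hD]; exact ⟨h, fun h' => absurd h' hD⟩

lemma eval_mk' (b : Bool) (p : ℝ) {D : Set ℝ} (h : D ≠ ∅) :
    (Move.mk' b p D).eval = uEval b p := by
  rw [mk'_eq_of_ne _ _ h]; rfl

lemma comp_dom (m2 m1 : Move) : (m2.comp m1).dom = m1.dom ∩ m1.eval ⁻¹' m2.dom := rfl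

lemma comp_isRefl (m2 m1 : Move) : (m2.comp m1).isRefl = (m2.isRefl != m1.isRefl) := rfl

lemma comp_eval (m2 m1 : Move) {x : ℝ} (hx : x ∈ (m2.comp m1).dom) :
    (m2.comp m1).eval x = m2.eval (m1.eval x) := by
  have hne : m1.dom ∩ m1.eval ⁻¹' m2.dom ≠ ∅ := (nonempty_of_mem hx).ne_empty
  rw [Move.comp, eval_mk' _ _ hne]
  cases h1 : m1.isRefl <;> cases h2 : m2.isRefl <;>
    simp [Move.eval, uEval, h1, h2] <;> ring

lemma inv_dom (m : Move) : m.inv.dom = m.eval '' m.dom := rfl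

lemma inv_isRefl (m : Move) : m.inv.isRefl = m.isRefl := rfl

lemma inv_eval (m : Move) {x : ℝ} (hx : x ∈ m.dom) : m.inv.eval (m.eval x) = x := by
  have hne : m.eval '' m.dom ≠ ∅ := (Set.nonempty_of_mem (Set.mem_image_of_mem _ hx)).ne_empty
  rw [Move.inv, eval_mk' _ _ hne]
  cases h : m.isRefl <;> simp [Move.eval, uEval, h, ipar]

lemma valid_comp {m1 m2 : Move} (h1 : m1.Valid) (h2 : m2.Valid) : (m2.comp m1).Valid :=
  mk'_valid _ _ ⟨h1.1.1.inter (h2.1.1.preimage (uEval_continuous _ _)),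
    h1.1.2.inter (ordConnected_preimage _ _ h2.1.2)⟩

lemma valid_inv {m : Move} (h : m.Valid) : m.inv.Valid :=
  mk'_valid _ _ (validDom_image _ _ h.1)

lemma mem_graph {m : Move} {x : ℝ} (hx : x ∈ m.dom) : (x, m.eval x) ∈ m.graph :=
  ⟨x, hx, rfl⟩

lemma graph_empty {m : Move} (h : m.dom = ∅) : m.graph = ∅ := by
  simp [Move.graph, h]

end Move

/-! ### Closure operators -/

/-- The set of all valid moves. -/
def allValid : Set Move := {m | m.Valid}

lemma isMoveSemigroup_allValid : IsMoveSemigroup allValid :=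
  ⟨fun _ hm => hm, fun _ h1 _ h2 => Move.valid_comp h1 h2, fun _ hm => Move.valid_inv hm⟩

lemma subset_semi (Ω : Set Move) : Ω ⊆ semi Ω := fun _ hm _ hΓ => hΓ.2 hm

lemma semi_le {Ω Γ : Set Move} (hΓ : IsMoveSemigroup Γ) (h : Ω ⊆ Γ) : semi Ω ⊆ Γ :=
  fun _ hm => hm Γ ⟨hΓ, h⟩

lemma isMoveSemigroup_semi {Ω : Set Move} (hΩ : Ω ⊆ allValid) :
    IsMoveSemigroup (semi Ω) := by
  refine ⟨fun m hm => hm allValid ⟨isMoveSemigroup_allValid, hΩ⟩, ?_, ?_⟩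
  · intro m1 h1 m2 h2 Γ hΓ
    exact hΓ.1.2.1 m1 (h1 Γ hΓ) m2 (h2 Γ hΓ)
  · intro m hm Γ hΓ
    exact hΓ.1.2.2 m (hm Γ hΓ)

lemma subset_joinCl (Ω : Set Move) : Ω ⊆ joinCl Ω := fun _ hm _ hΓ => hΓ.2 hm

lemma joinCl_le {Ω Γ : Set Move} (hΓ : JoinClosed Γ) (h : Ω ⊆ Γ) : joinCl Ω ⊆ Γ :=
  fun _ hm => hm Γ ⟨hΓ, h⟩

lemma joinClosed_joinCl (Ω : Set Move) : JoinClosed (joinCl Ω) := by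
  constructor
  · intro m hm D' hsub hval Γ hΓ
    exact hΓ.1.1 m (hm Γ hΓ) D' hsub hval
  · intro b p J hJ hmem hord Γ hΓ
    exact hΓ.1.2 b p J hJ (fun I hI => hmem I hI Γ hΓ) hord

lemma semi_subset_joinsemi (Ω : Set Move) : semi Ω ⊆ joinsemi Ω := subset_joinCl _

lemma joinsemi_le {Ω Γ : Set Move} (h1 : IsMoveSemigroup Γ) (h2 : JoinClosed Γ)
    (h : Ω ⊆ Γ) : joinsemi Ω ⊆ Γ :=
  joinCl_le h2 (semi_le h1 h)

/-! ### Reachability -/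

/-- `x` is connected to `y` by a move of character `b` in `Γ`. -/
def Reach (Γ : Set Move) (b : Bool) (x y : ℝ) : Prop :=
  ∃ m ∈ Γ, m.isRefl = b ∧ x ∈ m.dom ∧ m.eval x = y

lemma Reach.symm {Γ : Set Move} {b : Bool} {x y : ℝ} (hΓ : IsMoveSemigroup Γ)
    (h : Reach Γ b x y) : Reach Γ b y x := by
  obtain ⟨m, hm, hb, hx, he⟩ := h
  refine ⟨m.inv, hΓ.2.2 m hm, (Move.inv_isRefl m).trans hb, ?_, ?_⟩
  · rw [Move.inv_dom, ← he]; exact Set.mem_image_of_mem _ hx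
  · rw [← he]; exact Move.inv_eval m hx

lemma Reach.trans {Γ : Set Move} {b1 b2 : Bool} {x y z : ℝ} (hΓ : IsMoveSemigroup Γ)
    (h1 : Reach Γ b1 x y) (h2 : Reach Γ b2 y z) : Reach Γ (b2 != b1) x z := by
  obtain ⟨m1, hm1, hb1, hx1, he1⟩ := h1
  obtain ⟨m2, hm2, hb2, hx2, he2⟩ := h2
  have hxd : x ∈ (m2.comp m1).dom := ⟨hx1, by rw [Set.mem_preimage, he1]; exact hx2⟩
  exact ⟨m2.comp m1, hΓ.2.1 m1 hm1 m2 hm2, by rw [Move.comp_isRefl, hb1, hb2], hxd,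
    by rw [Move.comp_eval _ _ hxd, he1, he2]⟩

lemma reach_ff {Γ : Set Move} {g : Bool} {x y z : ℝ} (hΓ : IsMoveSemigroup Γ)
    (h1 : Reach Γ g x y) (h2 : Reach Γ g z y) : Reach Γ false x z := by
  have := h1.trans hΓ (h2.symm hΓ)
  rwa [bne_self_eq_false] at this

lemma reach_ff' {Γ : Set Move} {g : Bool} {a b b' : ℝ} (hΓ : IsMoveSemigroup Γ)
    (h1 : Reach Γ g a b) (h2 : Reach Γ g a b') : Reach Γ false b b' := by
  have := (h1.symm hΓ).trans hΓ h2
  rwa [bne_self_eq_false] at this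

/-! ### Generators -/

lemma reach_gen_t {Ω : Set Move} {O : Set (ℝ × ℝ)} (hO : IsOpen O)
    (hsub : tMoves O ⊆ Ω) {x y : ℝ} (h : (x, y) ∈ O) : Reach (semi Ω) false x y := by
  have hcont : Continuous (fun z : ℝ => (z, uEval false (y - x) z)) :=
    continuous_id.prodMk (uEval_continuous _ _)
  have hmem : (fun z : ℝ => (z, uEval false (y - x) z)) ⁻¹' O ∈ nhds x := by
    apply (hO.preimage hcont).mem_nhds
    simpa using h
  obtain ⟨l, u, hxlu, hsub'⟩ := mem_nhds_iff_exists_Ioo_subset.mp hmem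
  refine ⟨⟨false, y - x, Ioo l u⟩, subset_semi _ (hsub ?_), rfl, hxlu, show x + (y - x) = y by ring⟩
  refine ⟨rfl, ⟨⟨isOpen_Ioo, ordConnected_Ioo⟩,
    fun h' => absurd h' (Set.nonempty_of_mem hxlu).ne_empty⟩, ?_⟩
  rintro _ ⟨z, hz, rfl⟩
  exact hsub' hz

lemma reach_gen_r {Ω : Set Move} {O : Set (ℝ × ℝ)} (hO : IsOpen O)
    (hsub : rMoves O ⊆ Ω) {x y : ℝ} (h : (x, y) ∈ O) : Reach (semi Ω) true x y := by
  have hcont : Continuous (fun z : ℝ => (z, uEval true (x + y) z)) :=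
    continuous_id.prodMk (uEval_continuous _ _)
  have hmem : (fun z : ℝ => (z, uEval true (x + y) z)) ⁻¹' O ∈ nhds x := by
    apply (hO.preimage hcont).mem_nhds
    simpa using h
  obtain ⟨l, u, hxlu, hsub'⟩ := mem_nhds_iff_exists_Ioo_subset.mp hmem
  refine ⟨⟨true, x + y, Ioo l u⟩, subset_semi _ (hsub ?_), rfl, hxlu, show (x + y) - x = y by ring⟩
  refine ⟨rfl, ⟨⟨isOpen_Ioo, ordConnected_Ioo⟩,
    fun h' => absurd h' (Set.nonempty_of_mem hxlu).ne_empty⟩, ?_⟩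
  rintro _ ⟨z, hz, rfl⟩
  exact hsub' hz

/-! ### The connectedness argument -/

lemma reach_all {O : Set (ℝ × ℝ)} (hO : IsOpen O) (hc : IsConnected O)
    {Γ : Set Move} (hΓ : IsMoveSemigroup Γ) (gen : Bool)
    (hgen : ∀ x y : ℝ, (x, y) ∈ O → Reach Γ gen x y) {x₀ y₀ : ℝ} (h₀ : (x₀, y₀) ∈ O) :
    ∀ q ∈ O, Reach Γ false x₀ q.1 ∧ Reach Γ false y₀ q.2 := by
  haveI : PreconnectedSpace O := Subtype.preconnectedSpace hc.isPreconnected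
  set R : ℝ × ℝ → Prop := fun q => Reach Γ false x₀ q.1 ∧ Reach Γ false y₀ q.2 with hR
  -- local transfer inside a box
  have transfer : ∀ (U V : Set ℝ), U ×ˢ V ⊆ O → ∀ q ∈ U ×ˢ V, ∀ q' ∈ U ×ˢ V,
      R q → R q' := by
    rintro U V hUV ⟨a, b⟩ ⟨ha, hb⟩ ⟨a', b'⟩ ⟨ha', hb'⟩ ⟨r1, r2⟩
    have g1 : Reach Γ gen a b := hgen a b (hUV ⟨ha, hb⟩)
    have g2 : Reach Γ gen a' b := hgen a' b (hUV ⟨ha', hb⟩)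
    have g3 : Reach Γ gen a' b' := hgen a' b' (hUV ⟨ha', hb'⟩)
    have haa' : Reach Γ false a a' := reach_ff hΓ g1 g2
    have hbb' : Reach Γ false b b' := reach_ff' hΓ g2 g3
    constructor
    · have := r1.trans hΓ haa'
      rwa [bne_self_eq_false] at this
    · have := r2.trans hΓ hbb'
      rwa [bne_self_eq_false] at this
  set s : Set O := {q | R q.1} with hs
  have hopen : IsOpen s := by
    rw [isOpen_iff_mem_nhds]
    rintro ⟨⟨a, b⟩, hq⟩ hqs
    rw [mem_nhds_subtype]
    obtain ⟨U, hU, V, hV, hUV⟩ := mem_nhds_prod_iff.mp (hO.mem_nhds hq)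
    refine ⟨U ×ˢ V, mem_nhds_prod_iff.mpr ⟨U, hU, V, hV, le_refl _⟩, ?_⟩
    rintro ⟨q', hq'O⟩ hq'
    exact transfer U V hUV (a, b) ⟨mem_of_mem_nhds hU, mem_of_mem_nhds hV⟩ q' hq' hqs
  have hclosed : IsClosed s := by
    rw [← isOpen_compl_iff, isOpen_iff_mem_nhds]
    rintro ⟨⟨a, b⟩, hq⟩ hqs
    rw [mem_nhds_subtype]
    obtain ⟨U, hU, V, hV, hUV⟩ := mem_nhds_prod_iff.mp (hO.mem_nhds hq)
    refine ⟨U ×ˢ V, mem_nhds_prod_iff.mpr ⟨U, hU, V, hV, le_refl _⟩, ?_⟩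
    rintro ⟨q', hq'O⟩ hq' hq's
    exact hqs (transfer U V hUV q' hq' (a, b) ⟨mem_of_mem_nhds hU, mem_of_mem_nhds hV⟩ hq's)
  have hne : s.Nonempty := by
    refine ⟨⟨(x₀, y₀), h₀⟩, ?_, ?_⟩
    · exact reach_ff hΓ (hgen x₀ y₀ h₀) (hgen x₀ y₀ h₀)
    · exact reach_ff' hΓ (hgen x₀ y₀ h₀) (hgen x₀ y₀ h₀)
  have huniv : s = univ := IsClopen.eq_univ ⟨hclosed, hopen⟩ hne
  intro q hq
  have : (⟨q, hq⟩ : O) ∈ s := huniv ▸ mem_univ _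
  exact this

/-! ### Assembling moves from pointwise reachability -/

lemma mem_joinsemi_of_reach {Ω : Set Move} (hΩ : Ω ⊆ allValid) {m : Move} (hm : m.Valid)
    (hne : ∃ m' ∈ semi Ω, m'.isRefl = m.isRefl)
    (h : ∀ x ∈ m.dom, Reach (semi Ω) m.isRefl x (m.eval x)) :
    m ∈ joinsemi Ω := by
  have hjc := joinClosed_joinCl (semi Ω)
  rcases eq_or_ne m.dom ∅ with hD | hD
  · obtain ⟨m', hm', hb⟩ := hne
    have hmem := hjc.1 m' (subset_joinCl _ hm') ∅ (empty_subset _)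
      ⟨isOpen_empty, ordConnected_empty⟩
    rw [Move.mk'_empty] at hmem
    have hm0 : m = ⟨m'.isRefl, 0, ∅⟩ := by
      cases m
      simp_all [Move.Valid]
    rwa [← hm0] at hmem
  · have key : ∀ x ∈ m.dom, ∃ D' : Set ℝ, x ∈ D' ∧ D' ⊆ m.dom ∧
        Move.mk' m.isRefl m.param D' ∈ joinCl (semi Ω) := by
      intro x hx
      obtain ⟨mx, hmx, hbx, hxd, hex⟩ := h x hx
      have hvx : mx.Valid := (isMoveSemigroup_semi hΩ).1 mx hmx
      have hpx : mx.param = m.param := by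
        have hex' : uEval mx.isRefl mx.param x = uEval m.isRefl m.param x := hex
        rw [hbx] at hex'
        exact uEval_param_inj hex'
      refine ⟨mx.dom ∩ m.dom, ⟨hxd, hx⟩, inter_subset_right, ?_⟩
      have hres := hjc.1 mx (subset_joinCl _ hmx) (mx.dom ∩ m.dom) inter_subset_left
        ⟨hvx.1.1.inter hm.1.1, hvx.1.2.inter hm.1.2⟩
      rwa [hbx, hpx] at hres
    set J : Set (Set ℝ) :=
      {D | D ⊆ m.dom ∧ Move.mk' m.isRefl m.param D ∈ joinCl (semi Ω)} with hJ
    have hJU : ⋃₀ J = m.dom := by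
      apply subset_antisymm (sUnion_subset fun D hD' => hD'.1)
      intro x hx
      obtain ⟨D', h1, h2, h3⟩ := key x hx
      exact ⟨D', ⟨h2, h3⟩, h1⟩
    have hJne : J.Nonempty := by
      obtain ⟨x, hx⟩ := nonempty_iff_ne_empty.mpr hD
      obtain ⟨D', h1, h2, h3⟩ := key x hx
      exact ⟨D', h2, h3⟩
    have hjoin := hjc.2 m.isRefl m.param J hJne (fun I hI => hI.2) (hJU ▸ hm.1.2)
    rw [hJU, Move.mk'_eq_of_ne _ _ hD] at hjoin
    exact hjoin

/-! ### Closure properties of the target ensembles -/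

lemma isMoveSemigroup_movesIn_prod (S : Set ℝ) : IsMoveSemigroup (movesIn (S ×ˢ S)) := by
  refine ⟨fun m hm => hm.1, ?_, ?_⟩
  · rintro m1 ⟨hv1, hg1⟩ m2 ⟨hv2, hg2⟩
    refine ⟨Move.valid_comp hv1 hv2, ?_⟩
    rintro _ ⟨x, hx, rfl⟩
    have p1 := hg1 (Move.mem_graph hx.1)
    have p2 := hg2 (Move.mem_graph hx.2)
    beta_reduce
    rw [Move.comp_eval _ _ hx]
    exact ⟨p1.1, p2.2⟩
  · rintro m ⟨hv, hg⟩
    refine ⟨Move.valid_inv hv, ?_⟩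
    rintro _ ⟨_, ⟨x, hx, rfl⟩, rfl⟩
    have p := hg (Move.mem_graph hx)
    beta_reduce
    rw [Move.inv_eval m hx]
    exact ⟨p.2, p.1⟩

lemma isMoveSemigroup_tMoves_prod (S : Set ℝ) : IsMoveSemigroup (tMoves (S ×ˢ S)) := by
  have h := isMoveSemigroup_movesIn_prod S
  refine ⟨fun m hm => hm.2.1, ?_, ?_⟩
  · rintro m1 ⟨hb1, h1⟩ m2 ⟨hb2, h2⟩
    have := h.2.1 m1 h1 m2 h2
    exact ⟨by simp [Move.comp_isRefl, hb1, hb2], this.1, this.2⟩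
  · rintro m ⟨hb, h1⟩
    have := h.2.2 m h1
    exact ⟨by simp [Move.inv_isRefl, hb], this.1, this.2⟩

/-- Join-closedness of character-dependent graph-constrained ensembles. -/
lemma joinClosed_general (C : Bool → Prop) (F : Bool → Set (ℝ × ℝ)) :
    JoinClosed {m : Move | C m.isRefl ∧ m.Valid ∧ m.graph ⊆ F m.isRefl} := by
  constructor
  · rintro m ⟨hC, hv, hg⟩ D' hsub hvd
    refine ⟨hC, Move.mk'_valid _ _ hvd, ?_⟩
    rcases eq_or_ne D' ∅ with rfl | hne
    · rw [Move.graph_empty (Move.mk'_dom _ _ _)]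
      exact empty_subset _
    · rw [Move.mk'_eq_of_ne _ _ hne]
      rintro _ ⟨x, hx, rfl⟩
      exact hg (Move.mem_graph (hsub hx))
  · rintro b p J hJne hmem hord
    rcases eq_or_ne (⋃₀ J) ∅ with hU | hU
    · rw [hU, Move.mk'_empty]
      obtain ⟨I, hI⟩ := hJne
      refine ⟨(hmem I hI).1, ⟨⟨isOpen_empty, ordConnected_empty⟩, fun _ => rfl⟩, ?_⟩
      rw [Move.graph_empty rfl]
      exact empty_subset _
    · rw [Move.mk'_eq_of_ne _ _ hU]
      obtain ⟨I0, hI0⟩ := hJne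
      refine ⟨(hmem I0 hI0).1, ⟨⟨?_, hord⟩, fun h => absurd h hU⟩, ?_⟩
      · exact isOpen_sUnion fun I hI => ((hmem I hI).2.1).1.1
      · rintro _ ⟨x, hx, rfl⟩
        obtain ⟨I, hI, hxI⟩ := hx
        have hIne : I ≠ ∅ := (Set.nonempty_of_mem hxI).ne_empty
        have hgr := (hmem I hI).2.2
        have : (x, uEval b p x) ∈ (Move.mk' b p I).graph := by
          rw [Move.mk'_eq_of_ne _ _ hIne]
          exact Move.mem_graph (m := ⟨b, p, I⟩) hxI
        exact hgr this

lemma joinClosed_movesIn (X : Set (ℝ × ℝ)) : JoinClosed (movesIn X) := by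
  have h := joinClosed_general (fun _ => True) (fun _ => X)
  have he : {m : Move | True ∧ m.Valid ∧ m.graph ⊆ X} = movesIn X := by
    ext m; simp [movesIn]
  rwa [he] at h

lemma joinClosed_tMoves (X : Set (ℝ × ℝ)) : JoinClosed (tMoves X) := by
  have h := joinClosed_general (fun b => b = false) (fun _ => X)
  exact h

lemma union_eq_general (A B : Set (ℝ × ℝ)) :
    rMoves A ∪ tMoves B
      = {m : Move | True ∧ m.Valid ∧ m.graph ⊆ (if m.isRefl then A else B)} := by
  ext m
  cases hb : m.isRefl <;>
    simp [rMoves, tMoves, hb] <;> tauto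

lemma joinClosed_union (A B : Set (ℝ × ℝ)) : JoinClosed (rMoves A ∪ tMoves B) := by
  rw [union_eq_general]
  exact joinClosed_general (fun _ => True) (fun b => if b then A else B)

lemma isMoveSemigroup_2a {D I : Set ℝ} (hdisj : D ∩ I = ∅) :
    IsMoveSemigroup (rMoves (D ×ˢ I ∪ I ×ˢ D) ∪ tMoves (D ×ˢ D ∪ I ×ˢ I)) := by
  have hDI : ∀ a : ℝ, a ∈ D → a ∈ I → False := fun a h1 h2 => by
    have : a ∈ D ∩ I := ⟨h1, h2⟩
    rw [hdisj] at this
    exact this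
  rw [union_eq_general]
  refine ⟨fun m hm => hm.2.1, ?_, ?_⟩
  · rintro m1 ⟨-, hv1, hg1⟩ m2 ⟨-, hv2, hg2⟩
    refine ⟨trivial, Move.valid_comp hv1 hv2, ?_⟩
    rintro _ ⟨x, hx, rfl⟩
    have p1 := hg1 (Move.mem_graph hx.1)
    have p2 := hg2 (Move.mem_graph hx.2)
    beta_reduce
    rw [Move.comp_eval _ _ hx, Move.comp_isRefl]
    cases hb1 : m1.isRefl <;> cases hb2 : m2.isRefl <;>
      simp only [hb1, hb2, Bool.bne_false, Bool.bne_true, Bool.not_false, Bool.not_true,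
        if_true, if_false, Bool.false_eq_true, Bool.true_eq_false,
        mem_union, mem_prod] at p1 p2 ⊢ <;>
      rcases p1 with p1 | p1 <;> rcases p2 with p2 | p2 <;>
      first
        | exact Or.inl ⟨p1.1, p2.2⟩
        | exact Or.inr ⟨p1.1, p2.2⟩
        | exact absurd p2.1 (fun hh => hDI _ hh p1.2)
        | exact absurd p1.2 (fun hh => hDI _ hh p2.1)
  · rintro m ⟨-, hv, hg⟩
    refine ⟨trivial, Move.valid_inv hv, ?_⟩
    rintro _ ⟨_, ⟨x, hx, rfl⟩, rfl⟩
    have p := hg (Move.mem_graph hx)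
    beta_reduce
    rw [Move.inv_eval m hx, Move.inv_isRefl]
    cases hb : m.isRefl <;>
      simp only [hb, if_true, if_false, Bool.false_eq_true, Bool.true_eq_false,
        mem_union, mem_prod] at p ⊢ <;>
      rcases p with p | p <;> first | exact Or.inl ⟨p.2, p.1⟩ | exact Or.inr ⟨p.2, p.1⟩

lemma mem_domOf_imOf {O : Set (ℝ × ℝ)} (hO : IsOpen O) {x y : ℝ} (h : (x, y) ∈ O) :
    x ∈ domOf O ∧ y ∈ imOf O := by
  have hcont : Continuous (fun z : ℝ => (z, uEval false (y - x) z)) :=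
    continuous_id.prodMk (uEval_continuous _ _)
  have hmem : (fun z : ℝ => (z, uEval false (y - x) z)) ⁻¹' O ∈ nhds x := by
    apply (hO.preimage hcont).mem_nhds
    simpa using h
  obtain ⟨l, u, hxlu, hsub'⟩ := mem_nhds_iff_exists_Ioo_subset.mp hmem
  have hmm : (⟨false, y - x, Ioo l u⟩ : Move) ∈ movesIn O := by
    refine ⟨⟨⟨isOpen_Ioo, ordConnected_Ioo⟩,
      fun h' => absurd h' (Set.nonempty_of_mem hxlu).ne_empty⟩, ?_⟩
    rintro _ ⟨z, hz, rfl⟩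
    exact hsub' hz
  refine ⟨⟨_, hmm, hxlu⟩, ⟨_, hmm, ⟨x, hxlu, show x + (y - x) = y by ring⟩⟩⟩

lemma emptyT_mem (X : Set (ℝ × ℝ)) : (⟨false, 0, ∅⟩ : Move) ∈ tMoves X :=
  ⟨rfl, ⟨⟨isOpen_empty, ordConnected_empty⟩, fun _ => rfl⟩,
    by rw [Move.graph_empty rfl]; exact empty_subset _⟩

lemma emptyR_mem (X : Set (ℝ × ℝ)) : (⟨true, 0, ∅⟩ : Move) ∈ rMoves X :=
  ⟨rfl, ⟨⟨isOpen_empty, ordConnected_empty⟩, fun _ => rfl⟩,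
    by rw [Move.graph_empty rfl]; exact empty_subset _⟩

lemma comp_emptyR : Move.comp ⟨true, 0, ∅⟩ ⟨true, 0, ∅⟩ = ⟨false, 0, ∅⟩ := by
  simp [Move.comp, Move.mk']

end Aux

/-- The joined move semigroups generated by all moves through a connected
open set. -/
theorem joinsemi_of_open_set (O : Set (ℝ × ℝ))
    (hOopen : IsOpen O) (hOconn : IsConnected O) :
    (joinsemi (tMoves O)
        = tMoves ((domOf O ∪ imOf O) ×ˢ (domOf O ∪ imOf O))) ∧
    (domOf O ∩ imOf O = ∅ →
      joinsemi (rMoves O)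
        = rMoves ((domOf O ×ˢ imOf O) ∪ (imOf O ×ˢ domOf O)) ∪
          tMoves ((domOf O ×ˢ domOf O) ∪ (imOf O ×ˢ imOf O))) ∧
    ((domOf O ∩ imOf O).Nonempty →
      joinsemi (rMoves O)
        = movesIn ((domOf O ∪ imOf O) ×ˢ (domOf O ∪ imOf O))) ∧
    (joinsemi (movesIn O)
        = movesIn ((domOf O ∪ imOf O) ×ˢ (domOf O ∪ imOf O))) := by
  obtain ⟨⟨x₀, y₀⟩, h₀⟩ := hOconn.nonempty
  have hS0 := mem_domOf_imOf hOopen h₀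
  have hdomO : ∀ x ∈ domOf O, ∃ y, (x, y) ∈ O := by
    rintro x ⟨m, hm, hx⟩
    exact ⟨m.eval x, hm.2 (Move.mem_graph hx)⟩
  have himO : ∀ y ∈ imOf O, ∃ x, (x, y) ∈ O := by
    rintro y ⟨m, hm, x, hx, rfl⟩
    exact ⟨x, hm.2 (Move.mem_graph hx)⟩
  have hgsub : ∀ m : Move, m.Valid → m.graph ⊆ O →
      m.graph ⊆ (domOf O ∪ imOf O) ×ˢ (domOf O ∪ imOf O) := by
    rintro m hv hg _ ⟨x, hx, rfl⟩
    exact ⟨Or.inl ⟨m, ⟨hv, hg⟩, hx⟩, Or.inr ⟨m, ⟨hv, hg⟩, x, hx, rfl⟩⟩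
  have hgsubDI : ∀ m : Move, m.Valid → m.graph ⊆ O → m.graph ⊆ domOf O ×ˢ imOf O := by
    rintro m hv hg _ ⟨x, hx, rfl⟩
    exact ⟨⟨m, ⟨hv, hg⟩, hx⟩, ⟨m, ⟨hv, hg⟩, x, hx, rfl⟩⟩
  -- reflection-generated reachability (used in parts (2a) and (2b))
  have hΩr : rMoves O ⊆ allValid := fun m' hm' => hm'.2.1
  have hsgr := isMoveSemigroup_semi hΩr
  have hgenr : ∀ x y : ℝ, (x, y) ∈ O → Reach (semi (rMoves O)) true x y :=
    fun x y h => reach_gen_r hOopen (subset_refl _) h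
  have RAr := reach_all hOopen hOconn hsgr true hgenr h₀
  have hdomR : ∀ x ∈ domOf O, Reach (semi (rMoves O)) false x₀ x := by
    intro x hx
    obtain ⟨y, hy⟩ := hdomO x hx
    exact (RAr (x, y) hy).1
  have himR : ∀ y ∈ imOf O, Reach (semi (rMoves O)) false y₀ y := by
    intro y hy
    obtain ⟨z, hz⟩ := himO y hy
    exact (RAr (z, y) hz).2
  have hmix : ∀ x ∈ domOf O, ∀ y ∈ imOf O, Reach (semi (rMoves O)) true x y := by
    intro x hx y hy
    have t2 : Reach (semi (rMoves O)) true x y₀ :=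
      ((hdomR x hx).symm hsgr).trans hsgr (hgenr x₀ y₀ h₀)
    exact t2.trans hsgr (himR y hy)
  have hemptyR : (⟨true, 0, ∅⟩ : Move) ∈ semi (rMoves O) := subset_semi _ (emptyR_mem O)
  have hemptyT : (⟨false, 0, ∅⟩ : Move) ∈ semi (rMoves O) := by
    have := hsgr.2.1 _ hemptyR _ hemptyR
    rwa [comp_emptyR] at this
  refine ⟨?_, ?_, ?_, ?_⟩
  · -- (1) translations
    have hΩ : tMoves O ⊆ allValid := fun m' hm' => hm'.2.1
    have hsg := isMoveSemigroup_semi hΩ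
    have hgen : ∀ x y : ℝ, (x, y) ∈ O → Reach (semi (tMoves O)) false x y :=
      fun x y h => reach_gen_t hOopen (subset_refl _) h
    have RA := reach_all hOopen hOconn hsg false hgen h₀
    have hx0 : ∀ x ∈ domOf O ∪ imOf O, Reach (semi (tMoves O)) false x₀ x := by
      rintro x (hx | hx)
      · obtain ⟨y, hy⟩ := hdomO x hx
        exact (RA (x, y) hy).1
      · obtain ⟨z, hz⟩ := himO x hx
        exact (hgen x₀ y₀ h₀).trans hsg (RA (z, x) hz).2
    have hSS : ∀ x ∈ domOf O ∪ imOf O, ∀ y ∈ domOf O ∪ imOf O,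
        Reach (semi (tMoves O)) false x y := by
      intro x hx y hy
      exact ((hx0 x hx).symm hsg).trans hsg (hx0 y hy)
    apply subset_antisymm
    · refine joinsemi_le (isMoveSemigroup_tMoves_prod _) (joinClosed_tMoves _) ?_
      rintro m ⟨hb, hv, hg⟩
      exact ⟨hb, hv, hgsub m hv hg⟩
    · rintro m ⟨hb, hv, hg⟩
      refine mem_joinsemi_of_reach hΩ hv
        ⟨⟨false, 0, ∅⟩, subset_semi _ (emptyT_mem O), hb.symm⟩ ?_
      intro x hx
      have hp := hg (Move.mem_graph hx)
      rw [hb]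
      exact hSS x hp.1 (m.eval x) hp.2
  · -- (2a) reflections, disjoint case
    intro hdisj
    apply subset_antisymm
    · refine joinsemi_le (isMoveSemigroup_2a hdisj) (joinClosed_union _ _) ?_
      rintro m ⟨hb, hv, hg⟩
      exact Or.inl ⟨hb, hv, fun q hq => Or.inl (hgsubDI m hv hg hq)⟩
    · rintro m (⟨hb, hv, hg⟩ | ⟨hb, hv, hg⟩)
      · refine mem_joinsemi_of_reach hΩr hv ⟨_, hemptyR, hb.symm⟩ ?_
        intro x hx
        rw [hb]
        rcases hg (Move.mem_graph hx) with hp | hp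
        · exact hmix x hp.1 (m.eval x) hp.2
        · exact (hmix (m.eval x) hp.2 x hp.1).symm hsgr
      · refine mem_joinsemi_of_reach hΩr hv ⟨_, hemptyT, hb.symm⟩ ?_
        intro x hx
        rw [hb]
        rcases hg (Move.mem_graph hx) with hp | hp
        · exact ((hdomR x hp.1).symm hsgr).trans hsgr (hdomR (m.eval x) hp.2)
        · exact ((himR x hp.1).symm hsgr).trans hsgr (himR (m.eval x) hp.2)
  · -- (2b) reflections, overlapping case
    rintro ⟨z, hzD, hzI⟩
    have hanyf : ∀ x ∈ domOf O ∪ imOf O, Reach (semi (rMoves O)) false z x := by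
      rintro x (hx | hx)
      · exact ((hdomR z hzD).symm hsgr).trans hsgr (hdomR x hx)
      · exact ((himR z hzI).symm hsgr).trans hsgr (himR x hx)
    have hanyt : ∀ x ∈ domOf O ∪ imOf O, Reach (semi (rMoves O)) true z x := by
      rintro x (hx | hx)
      · exact (hmix x hx z hzI).symm hsgr
      · exact hmix z hzD x hx
    apply subset_antisymm
    · refine joinsemi_le (isMoveSemigroup_movesIn_prod _) (joinClosed_movesIn _) ?_
      rintro m ⟨hb, hv, hg⟩
      exact ⟨hv, hgsub m hv hg⟩
    · rintro m ⟨hv, hg⟩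
      refine mem_joinsemi_of_reach hΩr hv ?_ ?_
      · cases hb : m.isRefl
        · exact ⟨_, hemptyT, rfl⟩
        · exact ⟨_, hemptyR, rfl⟩
      · intro x hx
        have hp := hg (Move.mem_graph hx)
        cases hb : m.isRefl
        · exact ((hanyf x hp.1).symm hsgr).trans hsgr (hanyf (m.eval x) hp.2)
        · exact ((hanyf x hp.1).symm hsgr).trans hsgr (hanyt (m.eval x) hp.2)
  · -- (3) all moves
    have hΩ : movesIn O ⊆ allValid := fun m' hm' => hm'.1
    have hsg := isMoveSemigroup_semi hΩ
    have hgenf : ∀ x y : ℝ, (x, y) ∈ O → Reach (semi (movesIn O)) false x y :=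
      fun x y h => reach_gen_t hOopen (show tMoves O ⊆ movesIn O from fun m' hm' => ⟨hm'.2.1, hm'.2.2⟩) h
    have hgenr' : ∀ x y : ℝ, (x, y) ∈ O → Reach (semi (movesIn O)) true x y :=
      fun x y h => reach_gen_r hOopen (show rMoves O ⊆ movesIn O from fun m' hm' => ⟨hm'.2.1, hm'.2.2⟩) h
    have RA := reach_all hOopen hOconn hsg false hgenf h₀
    have hx0 : ∀ x ∈ domOf O ∪ imOf O, Reach (semi (movesIn O)) false x₀ x := by
      rintro x (hx | hx)
      · obtain ⟨y, hy⟩ := hdomO x hx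
        exact (RA (x, y) hy).1
      · obtain ⟨z, hz⟩ := himO x hx
        exact (hgenf x₀ y₀ h₀).trans hsg (RA (z, x) hz).2
    have hSSf : ∀ x ∈ domOf O ∪ imOf O, ∀ y ∈ domOf O ∪ imOf O,
        Reach (semi (movesIn O)) false x y := by
      intro x hx y hy
      exact ((hx0 x hx).symm hsg).trans hsg (hx0 y hy)
    have hSSt : ∀ x ∈ domOf O ∪ imOf O, ∀ y ∈ domOf O ∪ imOf O,
        Reach (semi (movesIn O)) true x y := by
      intro x hx y hy
      have t2 : Reach (semi (movesIn O)) true x y₀ :=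
        ((hx0 x hx).symm hsg).trans hsg (hgenr' x₀ y₀ h₀)
      have t3 : Reach (semi (movesIn O)) false y₀ y :=
        ((hx0 y₀ (Or.inr hS0.2)).symm hsg).trans hsg (hx0 y hy)
      exact t2.trans hsg t3
    apply subset_antisymm
    · refine joinsemi_le (isMoveSemigroup_movesIn_prod _) (joinClosed_movesIn _) ?_
      rintro m ⟨hv, hg⟩
      exact ⟨hv, hgsub m hv hg⟩
    · rintro m ⟨hv, hg⟩
      refine mem_joinsemi_of_reach hΩ hv ?_ ?_
      · cases hb : m.isRefl
        · exact ⟨_, subset_semi _ ((emptyT_mem O).2 : (⟨false, 0, ∅⟩ : Move) ∈ movesIn O),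
            rfl⟩
        · exact ⟨_, subset_semi _ ((emptyR_mem O).2 : (⟨true, 0, ∅⟩ : Move) ∈ movesIn O),
            rfl⟩
      · intro x hx
        have hp := hg (Move.mem_graph hx)
        cases hb : m.isRefl
        · exact hSSf x hp.1 (m.eval x) hp.2
        · exact hSSt x hp.1 (m.eval x) hp.2
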